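/- Let Φ be a unit-norm frame for ℝ^N and suppose the distance d_Φ from Φ to the set of scalable frames (in Frobenius norm, viewing frames as N×M matrices) satisfies d_Φ < 1. Then the infimum is attained: there exists a scalable frame Φ̂ (an N×M matrix admitting a nonnegative diagonal C with Φ̂ C Φ̂^T a positive multiple of the identity, or equal to I) with ‖Φ − Φ̂‖_F = d_Φ. -/

import Mathlib

open scoped BigOperators

/-- Frobenius norm of a matrix. -/
noncomputable def frobNorm {N M : ℕ} (A : Matrix (Fin N) (Fin M) ℝ) : ℝ :=
  Real.sqrt (∑ i, ∑ j, (A i j) ^ 2)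

/-- A matrix Ψ is scalable if there is a nonnegative diagonal C with Ψ C Ψᵀ = I. -/
def IsScalableMatrix {N M : ℕ} (Ψ : Matrix (Fin N) (Fin M) ℝ) : Prop :=
  ∃ c : Fin M → ℝ, (∀ i, 0 ≤ c i) ∧ Ψ * Matrix.diagonal c * Ψ.transpose = 1

lemma frobNorm_nonneg {N M : ℕ} (A : Matrix (Fin N) (Fin M) ℝ) : 0 ≤ frobNorm A :=
  Real.sqrt_nonneg _

lemma col_le_frobNorm {N M : ℕ} (A : Matrix (Fin N) (Fin M) ℝ) (j : Fin M) :
    Real.sqrt (∑ i, (A i j) ^ 2) ≤ frobNorm A := by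
  apply Real.sqrt_le_sqrt
  have : ∀ i : Fin N, (A i j) ^ 2 ≤ ∑ j', (A i j') ^ 2 := fun i =>
    Finset.single_le_sum (f := fun j' => (A i j') ^ 2) (fun j' _ => sq_nonneg _)
      (Finset.mem_univ j)
  exact Finset.sum_le_sum fun i _ => this i

lemma abs_entry_le_frobNorm {N M : ℕ} (A : Matrix (Fin N) (Fin M) ℝ) (i : Fin N) (j : Fin M) :
    |A i j| ≤ frobNorm A := by
  have h1 : |A i j| = Real.sqrt ((A i j) ^ 2) := (Real.sqrt_sq_eq_abs _).symm
  rw [h1]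
  apply Real.sqrt_le_sqrt
  calc (A i j) ^ 2 ≤ ∑ j', (A i j') ^ 2 :=
        Finset.single_le_sum (f := fun j' => (A i j') ^ 2) (fun j' _ => sq_nonneg _)
          (Finset.mem_univ j)
    _ ≤ ∑ i', ∑ j', (A i' j') ^ 2 :=
        Finset.single_le_sum (f := fun i' => ∑ j', (A i' j') ^ 2)
          (fun i' _ => Finset.sum_nonneg fun j' _ => sq_nonneg _) (Finset.mem_univ i)

lemma euclid_lower {N : ℕ} (u v : Fin N → ℝ) (b : ℝ) (hb : b ≤ 1) (hu : ∑ i, (u i)^2 = 1)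
    (hd : Real.sqrt (∑ i, (u i - v i)^2) ≤ b) : (1-b)^2 ≤ ∑ i, (v i)^2 := by
  set U : EuclideanSpace ℝ (Fin N) := (WithLp.equiv 2 _).symm u
  set V : EuclideanSpace ℝ (Fin N) := (WithLp.equiv 2 _).symm v
  have hU : ‖U‖ = 1 := by
    rw [EuclideanSpace.norm_eq]
    simp only [U, WithLp.equiv_symm_apply, PiLp.toLp_apply, Real.norm_eq_abs, sq_abs]
    rw [hu]; exact Real.sqrt_one
  have hUV : ‖U - V‖ ≤ b := by
    rw [EuclideanSpace.norm_eq]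
    simpa [U, V, Real.norm_eq_abs, sq_abs] using hd
  have h1 : 1 - b ≤ ‖V‖ := by
    have := norm_sub_norm_le U (U - V)
    simp at this
    linarith [hU ▸ this]
  have hV : ‖V‖ = Real.sqrt (∑ i, (v i)^2) := by
    rw [EuclideanSpace.norm_eq]; simp [V, Real.norm_eq_abs, sq_abs]
  calc (1-b)^2 ≤ ‖V‖^2 := by
        apply sq_le_sq' <;> nlinarith [norm_nonneg V]
    _ = ∑ i, (v i)^2 := by
        rw [hV, Real.sq_sqrt]; positivity

lemma trace_eq {N M : ℕ} (Ψ : Matrix (Fin N) (Fin M) ℝ) (c : Fin M → ℝ)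
    (h : Ψ * Matrix.diagonal c * Ψ.transpose = 1) :
    ∑ k, c k * (∑ i, (Ψ i k)^2) = N := by
  have h' := congrArg Matrix.trace h
  rw [Matrix.trace_one] at h'
  have hA : Ψ * Matrix.diagonal c = Matrix.of fun i k => Ψ i k * c k := by
    ext i k; simp [Matrix.mul_diagonal]
  rw [hA] at h'
  simp only [Matrix.trace, Matrix.diag, Matrix.mul_apply, Matrix.transpose_apply,
    Matrix.of_apply, Fintype.card_fin] at h'
  rw [← h', Finset.sum_comm]
  apply Finset.sum_congr rfl; intro k _
  rw [Finset.mul_sum]; apply Finset.sum_congr rfl; intro i _; ring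

lemma exists_scalable (N M : ℕ) (h : N ≤ M) :
    ∃ Ψ : Matrix (Fin N) (Fin M) ℝ, IsScalableMatrix Ψ := by
  refine ⟨Matrix.of fun i j => if (j : ℕ) = (i : ℕ) then (1:ℝ) else 0,
    fun _ => 1, fun _ => zero_le_one, ?_⟩
  rw [Matrix.diagonal_one, Matrix.mul_one]
  ext i i'
  rw [Matrix.mul_apply]
  simp only [Matrix.transpose_apply, Matrix.of_apply]
  rw [Finset.sum_eq_single (⟨(i:ℕ), lt_of_lt_of_le i.2 h⟩ : Fin M)]
  · by_cases hii : i = i'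
    · subst hii; simp [Matrix.one_apply]
    · have : (i : ℕ) ≠ (i' : ℕ) := fun hc => hii (Fin.ext hc)
      simp [Matrix.one_apply, this, hii]
  · intro k _ hk
    have : (k : ℕ) ≠ (i : ℕ) := fun hc => hk (Fin.ext hc)
    simp [this]
  · simp

lemma compact_box {N M : ℕ} (s : Fin N → Fin M → Set ℝ) (h : ∀ i j, IsCompact (s i j)) :
    IsCompact {A : Matrix (Fin N) (Fin M) ℝ | ∀ i j, A i j ∈ s i j} := by
  have : {A : Matrix (Fin N) (Fin M) ℝ | ∀ i j, A i j ∈ s i j}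
      = Set.univ.pi (fun i => Set.univ.pi fun j => s i j) := by
    ext A
    constructor
    · intro hA; intro i _; intro j _; exact hA i j
    · intro hA i j; exact hA i (Set.mem_univ i) j (Set.mem_univ j)
  rw [this]
  exact isCompact_univ_pi fun i => isCompact_univ_pi fun j => h i j

lemma continuous_frob {N M : ℕ} (Φ : Matrix (Fin N) (Fin M) ℝ) :
    Continuous (fun Ψ : Matrix (Fin N) (Fin M) ℝ => frobNorm (Φ - Ψ)) := by
  apply Real.continuous_sqrt.comp
  apply continuous_finset_sum
  intro i _
  apply continuous_finset_sum
  intro j _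
  have : Continuous fun Ψ : Matrix (Fin N) (Fin M) ℝ => Ψ i j :=
    (continuous_apply j).comp (continuous_apply i)
  exact ((continuous_const.sub this).pow 2)

/-- If Φ is a unit-norm frame with d_Φ < 1, the distance to the set of scalable
frames is attained by some scalable frame Φ̂. -/
theorem dist_to_scalable_attained (N M : ℕ) (Φ : Matrix (Fin N) (Fin M) ℝ)
    (hunit : ∀ j, ∑ i, (Φ i j) ^ 2 = 1) (hframe : Φ.rank = N)
    (dΦ : ℝ)
    (hd : dΦ = sInf {x : ℝ | ∃ Ψ : Matrix (Fin N) (Fin M) ℝ,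
      IsScalableMatrix Ψ ∧ x = frobNorm (Φ - Ψ)})
    (hlt : dΦ < 1) :
    ∃ Ψ : Matrix (Fin N) (Fin M) ℝ, IsScalableMatrix Ψ ∧ frobNorm (Φ - Ψ) = dΦ := by
  set S : Set ℝ := {x : ℝ | ∃ Ψ : Matrix (Fin N) (Fin M) ℝ,
      IsScalableMatrix Ψ ∧ x = frobNorm (Φ - Ψ)} with hS
  -- N ≤ M
  have hNM : N ≤ M := by
    rw [← hframe]
    simpa using Matrix.rank_le_card_width Φ
  -- S is nonempty
  have hne : S.Nonempty := by
    obtain ⟨Ψ, hΨ⟩ := exists_scalable N M hNM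
    exact ⟨frobNorm (Φ - Ψ), Ψ, hΨ, rfl⟩
  have hbdd : BddBelow S := by
    refine ⟨0, fun x hx => ?_⟩
    obtain ⟨Ψ, _, rfl⟩ := hx
    exact frobNorm_nonneg _
  have hd0 : 0 ≤ dΦ := by
    rw [hd]
    exact le_csInf hne (fun x hx => by obtain ⟨Ψ, _, rfl⟩ := hx; exact frobNorm_nonneg _)
  set b : ℝ := (dΦ + 1) / 2 with hbdef
  have hdb : dΦ < b := by simp [hbdef]; linarith
  have hb1 : b < 1 := by simp [hbdef]; linarith
  have hb0 : 0 < 1 - b := by linarith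
  set R : ℝ := N / (1 - b)^2 with hRdef
  -- key bound: scalable near Φ forces bounded scalings
  have key : ∀ (Ψ : Matrix (Fin N) (Fin M) ℝ) (c : Fin M → ℝ), (∀ i, 0 ≤ c i) →
      Ψ * Matrix.diagonal c * Ψ.transpose = 1 → frobNorm (Φ - Ψ) ≤ b →
      ∀ j, c j ≤ R := by
    intro Ψ c hc heq hfr j
    have hcol : (1 - b)^2 ≤ ∑ i, (Ψ i j)^2 := by
      apply euclid_lower (fun i => Φ i j) (fun i => Ψ i j) b (le_of_lt hb1) (hunit j)
      calc Real.sqrt (∑ i, (Φ i j - Ψ i j)^2) = Real.sqrt (∑ i, ((Φ - Ψ) i j)^2) := by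
            simp only [Matrix.sub_apply]
        _ ≤ frobNorm (Φ - Ψ) := col_le_frobNorm _ j
        _ ≤ b := hfr
    have htr := trace_eq Ψ c heq
    have h1 : c j * (1 - b)^2 ≤ c j * ∑ i, (Ψ i j)^2 :=
      mul_le_mul_of_nonneg_left hcol (hc j)
    have h2 : c j * ∑ i, (Ψ i j)^2 ≤ ∑ k, c k * ∑ i, (Ψ i k)^2 :=
      Finset.single_le_sum (f := fun k => c k * ∑ i, (Ψ i k)^2)
        (fun k _ => mul_nonneg (hc k) (Finset.sum_nonneg fun i _ => sq_nonneg _))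
        (Finset.mem_univ j)
    rw [hRdef, le_div_iff₀ (by positivity)]
    calc c j * (1 - b)^2 ≤ ∑ k, c k * ∑ i, (Ψ i k)^2 := le_trans h1 h2
      _ = N := htr
  -- the compact constraint set
  set K : Set (Matrix (Fin N) (Fin M) ℝ × (Fin M → ℝ)) :=
    {p | (∀ j, p.2 j ∈ Set.Icc (0:ℝ) R) ∧ p.1 * Matrix.diagonal p.2 * p.1.transpose = 1 ∧
      frobNorm (Φ - p.1) ≤ b} with hK
  have hKne : K.Nonempty := by
    have : sInf S < b := by rw [← hd]; exact hdb
    obtain ⟨x, hxS, hxb⟩ := (csInf_lt_iff hbdd hne).mp this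
    obtain ⟨Ψ, ⟨c, hc, heq⟩, rfl⟩ := hxS
    refine ⟨(Ψ, c), ⟨fun j => ⟨hc j, key Ψ c hc heq (le_of_lt hxb) j⟩, heq, le_of_lt hxb⟩⟩
  -- K is compact: closed subset of a compact box
  have hKcl : IsClosed K := by
    have h1 : IsClosed {p : Matrix (Fin N) (Fin M) ℝ × (Fin M → ℝ) |
        ∀ j, p.2 j ∈ Set.Icc (0:ℝ) R} := by
      have : {p : Matrix (Fin N) (Fin M) ℝ × (Fin M → ℝ) | ∀ j, p.2 j ∈ Set.Icc (0:ℝ) R}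
          = ⋂ j, {p | p.2 j ∈ Set.Icc (0:ℝ) R} := by
        ext p; simp
      rw [this]
      apply isClosed_iInter
      intro j
      exact IsClosed.preimage ((continuous_apply j).comp continuous_snd) isClosed_Icc
    have h2 : IsClosed {p : Matrix (Fin N) (Fin M) ℝ × (Fin M → ℝ) |
        p.1 * Matrix.diagonal p.2 * p.1.transpose = 1} := by
      apply isClosed_eq _ continuous_const
      exact ((continuous_fst.matrix_mul (Continuous.matrix_diagonal continuous_snd)).matrix_mul
        continuous_fst.matrix_transpose)
    have h3 : IsClosed {p : Matrix (Fin N) (Fin M) ℝ × (Fin M → ℝ) |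
        frobNorm (Φ - p.1) ≤ b} := by
      apply IsClosed.preimage ((continuous_frob Φ).comp continuous_fst) isClosed_Iic
    exact h1.inter (h2.inter h3)
  have hKsub : K ⊆ {A : Matrix (Fin N) (Fin M) ℝ |
        ∀ i j, A i j ∈ Set.Icc (Φ i j - b) (Φ i j + b)} ×ˢ
      {c : Fin M → ℝ | ∀ j, c j ∈ Set.Icc (0:ℝ) R} := by
    rintro ⟨Ψ, c⟩ ⟨hc, heq, hfr⟩
    constructor
    · intro i j
      have := abs_entry_le_frobNorm (Φ - Ψ) i j
      rw [Matrix.sub_apply] at this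
      have habs : |Φ i j - Ψ i j| ≤ b := le_trans this hfr
      rw [abs_le] at habs
      constructor <;> linarith [habs.1, habs.2]
    · exact hc
  have hKcompact : IsCompact K := by
    apply IsCompact.of_isClosed_subset _ hKcl hKsub
    apply IsCompact.prod
    · exact compact_box _ fun i j => isCompact_Icc
    · have : {c : Fin M → ℝ | ∀ j, c j ∈ Set.Icc (0:ℝ) R}
          = Set.univ.pi (fun _ => Set.Icc (0:ℝ) R) := by
        ext c
        constructor
        · intro hc j _; exact hc j
        · intro hc j; exact hc j (Set.mem_univ j)
      rw [this]
      exact isCompact_univ_pi fun _ => isCompact_Icc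
  -- minimize
  obtain ⟨⟨Ψ₀, c₀⟩, hmem, hmin⟩ := hKcompact.exists_isMinOn hKne
    (((continuous_frob Φ).comp continuous_fst).continuousOn)
  obtain ⟨hc₀, heq₀, hfr₀⟩ := hmem
  refine ⟨Ψ₀, ⟨c₀, fun j => (hc₀ j).1, heq₀⟩, ?_⟩
  have hge : dΦ ≤ frobNorm (Φ - Ψ₀) := by
    rw [hd]
    exact csInf_le hbdd ⟨Ψ₀, ⟨c₀, fun j => (hc₀ j).1, heq₀⟩, rfl⟩
  have hle : frobNorm (Φ - Ψ₀) ≤ dΦ := by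
    by_contra hcon
    push_neg at hcon
    have hlt2 : sInf S < min (frobNorm (Φ - Ψ₀)) b := by
      rw [← hd]; exact lt_min hcon hdb
    obtain ⟨x, hxS, hxb⟩ := (csInf_lt_iff hbdd hne).mp hlt2
    obtain ⟨Ψ, ⟨c, hc, heq⟩, rfl⟩ := hxS
    have hxb2 : frobNorm (Φ - Ψ) ≤ b := le_of_lt (lt_of_lt_of_le hxb (min_le_right _ _))
    have hmemK : (Ψ, c) ∈ K := ⟨fun j => ⟨hc j, key Ψ c hc heq hxb2 j⟩, heq, hxb2⟩
    have := hmin hmemK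
    simp only [Function.comp] at this
    have h2 : frobNorm (Φ - Ψ₀) ≤ frobNorm (Φ - Ψ) := this
    have h3 : frobNorm (Φ - Ψ) < frobNorm (Φ - Ψ₀) :=
      lt_of_lt_of_le hxb (min_le_left _ _)
    linarith
  linarith
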